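/- (Example 1, comparison of bounds) Let δ ∈ (0, 1/2), ν ∈ (−1+2δ, 1−2δ), μ ∈ (−1, 1), and let m > 1 be a real number. Set δ₁ = 2δ/(1+ν) and δ₄ = 2δ/(1−ν). Then log[(m/2)(1+μ)]/|log(1−δ₁)| + log[(m/2)(1−μ)]/|log(1−δ₄)| < (log m)/|log(1−δ)|. -/

import Mathlib

/-- Bernoulli-type key lemma: for `0 < δ`, `2δ < t ≤ 2`,
`2 * (-log(1-δ)) ≤ t * (-log(1 - 2δ/t))`. -/
lemma key_log (δ t : ℝ) (hδ : 0 < δ) (h1 : 2 * δ < t) (h2 : t ≤ 2) :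
    2 * (-Real.log (1 - δ)) ≤ t * (-Real.log (1 - 2 * δ / t)) := by
  have ht : 0 < t := lt_trans (by linarith) h1
  have hδ1 : δ < 1 := by linarith
  have h1δ : 0 < 1 - δ := by linarith
  have hp : 1 ≤ 2 / t := by rw [le_div_iff₀ ht]; linarith
  have hs : (-1 : ℝ) ≤ -δ := by linarith
  have hb := one_add_mul_self_le_rpow_one_add hs hp
  have heq : 1 + 2 / t * -δ = 1 - 2 * δ / t := by field_simp; ring
  have heq2 : 1 + -δ = 1 - δ := by ring
  rw [heq, heq2] at hb
  have hδ' : 2 * δ / t < 1 := by rw [div_lt_one ht]; linarith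
  have hδ'0 : 0 < 2 * δ / t := by positivity
  have hpos : 0 < 1 - 2 * δ / t := by linarith
  have hlog : Real.log (1 - 2 * δ / t) ≤ 2 / t * Real.log (1 - δ) := by
    calc Real.log (1 - 2 * δ / t) ≤ Real.log ((1 - δ) ^ (2 / t : ℝ)) :=
          Real.log_le_log hpos hb
      _ = 2 / t * Real.log (1 - δ) := Real.log_rpow h1δ (2 / t)
  rw [mul_neg, mul_neg, neg_le_neg_iff]
  calc t * Real.log (1 - 2 * δ / t) ≤ t * (2 / t * Real.log (1 - δ)) := by
        nlinarith [mul_le_mul_of_nonneg_left hlog ht.le]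
    _ = 2 * Real.log (1 - δ) := by field_simp

theorem stmt_12 (δ ν μ m : ℝ) (hδ0 : 0 < δ) (hδ1 : δ < 1 / 2)
    (hν1 : -1 + 2 * δ < ν) (hν2 : ν < 1 - 2 * δ)
    (hμ1 : -1 < μ) (hμ2 : μ < 1) (hm : 1 < m)
    (δ₁ δ₄ : ℝ) (hδ₁ : δ₁ = 2 * δ / (1 + ν)) (hδ₄ : δ₄ = 2 * δ / (1 - ν)) :
    Real.log (m / 2 * (1 + μ)) / (-Real.log (1 - δ₁))
        + Real.log (m / 2 * (1 - μ)) / (-Real.log (1 - δ₄))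
      < Real.log m / (-Real.log (1 - δ)) := by
  have hm0 : (0 : ℝ) < m := by linarith
  set L := -Real.log (1 - δ) with hLdef
  have hL0 : 0 < L := by
    have h : Real.log (1 - δ) < 0 := Real.log_neg (by linarith) (by linarith)
    simp only [hLdef]; linarith
  -- the two auxiliary deltas
  have hν1' : 2 * δ < 1 + ν := by linarith
  have hν4' : 2 * δ < 1 - ν := by linarith
  have hδ₁0 : 0 < δ₁ := by rw [hδ₁]; exact div_pos (by linarith) (by linarith)
  have hδ₄0 : 0 < δ₄ := by rw [hδ₄]; exact div_pos (by linarith) (by linarith)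
  have hδ₁1 : δ₁ < 1 := by rw [hδ₁, div_lt_one (by linarith)]; linarith
  have hδ₄1 : δ₄ < 1 := by rw [hδ₄, div_lt_one (by linarith)]; linarith
  set L₁ := -Real.log (1 - δ₁) with hL₁def
  set L₄ := -Real.log (1 - δ₄) with hL₄def
  have hL₁0 : 0 < L₁ := by
    have h : Real.log (1 - δ₁) < 0 := Real.log_neg (by linarith) (by linarith)
    simp only [hL₁def]; linarith
  have hL₄0 : 0 < L₄ := by
    have h : Real.log (1 - δ₄) < 0 := Real.log_neg (by linarith) (by linarith)
    simp only [hL₄def]; linarith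
  have key₁ : 2 * L ≤ (1 + ν) * L₁ := by
    have := key_log δ (1 + ν) hδ0 hν1' (by linarith)
    rw [← hδ₁] at this; exact this
  have key₄ : 2 * L ≤ (1 - ν) * L₄ := by
    have := key_log δ (1 - ν) hδ0 hν4' (by linarith)
    rw [← hδ₄] at this; exact this
  -- names for numerators
  set a := m / 2 * (1 + μ) with hadef
  set b := m / 2 * (1 - μ) with hbdef
  clear_value L L₁ L₄ a b
  have ha0 : 0 < a := by rw [hadef]; nlinarith
  have hb0 : 0 < b := by rw [hbdef]; nlinarith
  have ham : a < m := by rw [hadef]; nlinarith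
  have hbm : b < m := by rw [hbdef]; nlinarith
  have hlogm : 0 < Real.log m := Real.log_pos hm
  have hloga : Real.log a < Real.log m := Real.log_lt_log ha0 ham
  have hlogb : Real.log b < Real.log m := Real.log_lt_log hb0 hbm
  have hν1p : 0 < 1 + ν := by linarith
  have hν4p : 0 < 1 - ν := by linarith
  -- per-term bounds
  have hT₁ : Real.log a / L₁ ≤ (1 + ν) * max 0 (Real.log a) / (2 * L) := by
    rcases le_or_gt (Real.log a) 0 with h | h
    · rw [max_eq_left h, mul_zero, zero_div]
      exact div_nonpos_of_nonpos_of_nonneg h hL₁0.le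
    · rw [max_eq_right h.le, div_le_div_iff₀ hL₁0 (by positivity)]
      calc Real.log a * (2 * L) ≤ Real.log a * ((1 + ν) * L₁) :=
            mul_le_mul_of_nonneg_left key₁ h.le
        _ = (1 + ν) * Real.log a * L₁ := by ring
  have hT₄ : Real.log b / L₄ ≤ (1 - ν) * max 0 (Real.log b) / (2 * L) := by
    rcases le_or_gt (Real.log b) 0 with h | h
    · rw [max_eq_left h, mul_zero, zero_div]
      exact div_nonpos_of_nonpos_of_nonneg h hL₄0.le
    · rw [max_eq_right h.le, div_le_div_iff₀ hL₄0 (by positivity)]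
      calc Real.log b * (2 * L) ≤ Real.log b * ((1 - ν) * L₄) :=
            mul_le_mul_of_nonneg_left key₄ h.le
        _ = (1 - ν) * Real.log b * L₄ := by ring
  have hmax₁ : max 0 (Real.log a) < Real.log m := max_lt hlogm hloga
  have hmax₄ : max 0 (Real.log b) < Real.log m := max_lt hlogm hlogb
  have hsum : (1 + ν) * max 0 (Real.log a) + (1 - ν) * max 0 (Real.log b)
      < 2 * Real.log m := by
    have h1 : (1 + ν) * max 0 (Real.log a) < (1 + ν) * Real.log m :=
      mul_lt_mul_of_pos_left hmax₁ hν1p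
    have h2 : (1 - ν) * max 0 (Real.log b) < (1 - ν) * Real.log m :=
      mul_lt_mul_of_pos_left hmax₄ hν4p
    have h3 : (1 + ν) * Real.log m + (1 - ν) * Real.log m = 2 * Real.log m := by ring
    linarith [h1, h2, h3]
  calc Real.log a / L₁ + Real.log b / L₄
      ≤ (1 + ν) * max 0 (Real.log a) / (2 * L)
        + (1 - ν) * max 0 (Real.log b) / (2 * L) := by linarith
    _ = ((1 + ν) * max 0 (Real.log a) + (1 - ν) * max 0 (Real.log b)) / (2 * L) := by
        rw [← add_div]
    _ < 2 * Real.log m / (2 * L) := by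
        have h2L : (0:ℝ) < 2 * L := by positivity
        exact (div_lt_div_iff_of_pos_right h2L).mpr hsum
    _ = Real.log m / L := by field_simp
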